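/- Let G be a finite group and let p be the smallest prime divisor of |G|. Then there exists a (G, p, 1) difference matrix. -/

import Mathlib

def IsDiffMatrix {G : Type*} [Group G] {I J : Type*} (A : I → J → G) (lam : ℕ) : Prop :=
  Nat.card J = lam * Nat.card G ∧
  ∀ i ℓ : I, i ≠ ℓ → ∀ g : G, Nat.card {j : J // A i j * (A ℓ j)⁻¹ = g} = lam

/-- If `p` is the smallest prime divisor of `|G|`, then there exists a `(G, p, 1)`
difference matrix. -/
theorem stmt_7 {G : Type*} [Group G] [Finite G] (hG : 1 < Nat.card G)
    (p : ℕ) (hp : p = (Nat.card G).minFac) :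
    ∃ A : Fin p → Fin (Nat.card G) → G, IsDiffMatrix A 1 := by
  classical
  set n := Nat.card G with hn
  have e : Fin n ≃ G := (Finite.equivFinOfCardEq (hn.symm)).symm
  refine ⟨fun i j => (e j) ^ (i : ℕ), ?_, ?_⟩
  · simp; exact hn
  · intro i ℓ hiℓ g
    set d : ℤ := (i : ℕ) - (ℓ : ℕ) with hd
    have hd0 : d ≠ 0 := by
      simp only [hd, sub_ne_zero]
      exact_mod_cast fun h => hiℓ (Fin.ext (by exact_mod_cast h))
    have hdabs : d.natAbs < p := by
      have h1 : (i : ℕ) < p := i.isLt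
      have h2 : (ℓ : ℕ) < p := ℓ.isLt
      omega
    -- coprimality
    have hcop : Nat.Coprime d.natAbs n := by
      by_contra h
      set g0 := Nat.gcd d.natAbs n with hg0
      have hg1 : g0 ≠ 1 := h
      have hna : d.natAbs ≠ 0 := Int.natAbs_ne_zero.mpr hd0
      have hg0ne : g0 ≠ 0 := by
        simp [hg0, Nat.gcd_eq_zero_iff]
        omega
      have hprime : (g0.minFac).Prime := Nat.minFac_prime hg1
      have hdvd1 : g0.minFac ∣ d.natAbs := hprime.dvd_of_dvd_pow (n := 1) (by
        simpa using (Nat.minFac_dvd g0).trans (Nat.gcd_dvd_left _ _))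
      have hdvd2 : g0.minFac ∣ n := (Nat.minFac_dvd g0).trans (Nat.gcd_dvd_right _ _)
      have hple : p ≤ g0.minFac := by
        rw [hp]
        exact Nat.minFac_le_of_dvd hprime.two_le hdvd2
      have : g0.minFac ≤ d.natAbs := Nat.le_of_dvd (Nat.pos_of_ne_zero hna) hdvd1
      omega
    have hIsCop : IsCoprime d (n : ℤ) := by
      rw [Int.isCoprime_iff_gcd_eq_one]
      simpa [Int.gcd] using hcop
    obtain ⟨u, v, huv⟩ := hIsCop
    have hcard : ∀ x : G, x ^ (n : ℤ) = 1 := by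
      intro x
      rw [zpow_natCast, hn, pow_card_eq_one']
    have key : ∀ j : Fin n, ((e j) ^ (i : ℕ) * ((e j) ^ (ℓ : ℕ))⁻¹ = g ↔ j = e.symm (g ^ u)) := by
      intro j
      have hz : (e j) ^ (i : ℕ) * ((e j) ^ (ℓ : ℕ))⁻¹ = (e j) ^ d := by
        rw [hd, zpow_sub, zpow_natCast, zpow_natCast]
      rw [hz]
      constructor
      · intro hx
        have : (e j) = (e j) ^ (u * d + v * n) := by rw [huv, zpow_one]
        rw [zpow_add, mul_comm u d, mul_comm v (n:ℤ), zpow_mul, zpow_mul, hx, hcard, one_zpow,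
          mul_one] at this
        have : e j = g ^ u := this
        rw [← this, Equiv.symm_apply_apply]
      · intro hj
        have hej : e j = g ^ u := by rw [hj, Equiv.apply_symm_apply]
        rw [hej, ← zpow_mul]
        have : u * d = 1 - v * n := by linarith
        rw [this, zpow_sub, zpow_one, mul_comm v (n:ℤ), zpow_mul, hcard, one_zpow]
        simp
    simp only [key]
    rw [Nat.card_eq_fintype_card, Fintype.card_subtype_eq]
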